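/- Let I = I_{(m_1,…,m_t)} ⊆ S be a canonical critical monomial ideal. Then, as a K-vector space, I is the internal direct sum I = ⊕_{j=1}^{t−1} x_j (∏_{k=1}^{j} m_k) K[x_j, x_{j+1},…,x_n] ⊕ (∏_{k=1}^{t} m_k) K[x_t,…,x_n], where each summand u K[x_j,…,x_n] is the K-span of the monomials u·v with v a monomial in the variables x_j,…,x_n. -/

import Mathlib

open MvPolynomial

noncomputable section

variable (K : Type*) [Field K]

/-- The set of monomials (with coefficient 1) whose variables lie in `Z`. -/
def monomialsIn {σ : Type*} (Z : Set σ) : Set (MvPolynomial σ K) :=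
  {p | ∃ a : σ →₀ ℕ, ↑a.support ⊆ Z ∧ p = monomial a 1}

/-- `u K[Z]` : the `K`-linear span of the polynomials `u * v`, `v` a monomial in `Z`. -/
def stanleySpace {σ : Type*} (u : MvPolynomial σ K) (Z : Set σ) :
    Submodule K (MvPolynomial σ K) :=
  Submodule.span K ((u * ·) '' monomialsIn K Z)


/-- The generators `x₁m₁, x₂m₁m₂, …, x_{t-1}m₁⋯m_{t-1}, m₁⋯m_t` (0-indexed) of the
canonical critical monomial ideal `I_{(m₁,…,m_t)}`. -/
def ccGens {n t : ℕ} (ht : t ≤ n) (m : Fin t → MvPolynomial (Fin n) K) (j : Fin t) :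
    MvPolynomial (Fin n) K :=
  (if (j : ℕ) < t - 1 then X (Fin.castLE ht j) else 1) * ∏ k ∈ Finset.Iic j, m k


private lemma prod_monomial_one' {K : Type*} [Field K] {σ ι : Type*} (s : Finset ι)
    (f : ι → (σ →₀ ℕ)) :
    ∏ k ∈ s, (monomial (f k) (1 : K)) = monomial (∑ k ∈ s, f k) 1 := by
  classical
  induction s using Finset.induction with
  | empty => simp
  | insert _ _ h ih => rw [Finset.prod_insert h, Finset.sum_insert h, ih, monomial_mul, one_mul]

/-- As a `K`-vector space, the canonical critical monomial ideal
`I = I_{(m₁,…,m_t)}` is the internal direct sum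
`I = ⊕_{j=1}^{t-1} x_j (m₁⋯m_j) K[x_j,…,x_n] ⊕ (m₁⋯m_t) K[x_t,…,x_n]`
(here the `j`-th summand, `0`-indexed `j : Fin t`, is `(ccGens j) K[x_j,…,x_n]`). -/
theorem canonical_critical_ideal_direct_sum
    {K : Type*} [Field K] {n t : ℕ} (ht1 : 1 ≤ t) (ht : t ≤ n)
    (m : Fin t → MvPolynomial (Fin n) K)
    (hm : ∀ i : Fin t, ∃ a : Fin n →₀ ℕ,
      ↑a.support ⊆ {k : Fin n | (i : ℕ) ≤ (k : ℕ)} ∧ m i = monomial a 1)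
    (hdeg : 0 < (m ⟨t - 1, by omega⟩).totalDegree)
    (I : Ideal (MvPolynomial (Fin n) K))
    (hI : I = Ideal.span (Set.range (ccGens K ht m))) :
    iSupIndep (fun j : Fin t =>
        stanleySpace K (ccGens K ht m j) {k : Fin n | (j : ℕ) ≤ (k : ℕ)}) ∧
    (⨆ j : Fin t, stanleySpace K (ccGens K ht m j) {k : Fin n | (j : ℕ) ≤ (k : ℕ)})
      = Submodule.restrictScalars K I := by
  classical
  choose a hsupp hma using hm
  -- vanishing of `a k` below its index
  have ha0 : ∀ (k : Fin t) (p : Fin n), (p : ℕ) < (k : ℕ) → a k p = 0 := by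
    intro k p hpk
    by_contra h
    have hp : p ∈ (a k).support := Finsupp.mem_support_iff.mpr h
    have := hsupp k hp
    simp only [Set.mem_setOf_eq] at this
    omega
  set A : Fin t → (Fin n →₀ ℕ) := fun j => ∑ k ∈ Finset.Iic j, a k with hA
  set b : Fin t → (Fin n →₀ ℕ) := fun j =>
    (if (j : ℕ) < t - 1 then Finsupp.single (Fin.castLE ht j) 1 else 0) + A j with hb
  -- coordinates of A
  have hAapply : ∀ (j : Fin t) (p : Fin n), A j p = ∑ k ∈ Finset.Iic j, a k p := by
    intro j p
    simp [hA, Finsupp.finset_sum_apply]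
  have hAcoord : ∀ (j j' : Fin t) (p : Fin n),
      (p : ℕ) ≤ (j : ℕ) → (p : ℕ) ≤ (j' : ℕ) → A j p = A j' p := by
    have key : ∀ (j : Fin t) (p : Fin n) (hpj : (p : ℕ) ≤ (j : ℕ)),
        A j p = ∑ k ∈ Finset.Iic (⟨(p : ℕ), by omega⟩ : Fin t), a k p := by
      intro j p hpj
      rw [hAapply]
      refine (Finset.sum_subset ?_ ?_).symm
      · intro k hk
        simp only [Finset.mem_Iic] at hk ⊢
        exact le_trans hk (by exact_mod_cast hpj)
      · intro k _ hk
        simp only [Finset.mem_Iic, Fin.le_def] at hk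
        exact ha0 k p (by omega)
    intro j j' p h1 h2
    rw [key j p h1, key j' p h2]
  have hAmono : ∀ (j j' : Fin t), j' ≤ j → ∀ p : Fin n, A j' p ≤ A j p := by
    intro j j' hj p
    rw [hAapply, hAapply]
    exact Finset.sum_le_sum_of_subset (Finset.Iic_subset_Iic.mpr hj)
  have hbA : ∀ (j : Fin t) (p : Fin n), A j p ≤ b j p := by
    intro j p
    simp only [hb, Finsupp.add_apply]
    omega
  -- generators are monomials with exponent b j
  have hgen : ∀ j, ccGens K ht m j = monomial (b j) 1 := by
    intro j
    have hprod : ∏ k ∈ Finset.Iic j, m k = monomial (A j) (1 : K) := by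
      rw [Finset.prod_congr rfl (fun k _ => hma k), prod_monomial_one']
    unfold ccGens
    by_cases hj : (j : ℕ) < t - 1
    · simp only [hb, hj, if_true, hprod, X, monomial_mul, one_mul]
    · simp only [hb, hj, if_false, hprod, one_mul, zero_add]
  set Z : Fin t → Set (Fin n) := fun j => {k : Fin n | (j : ℕ) ≤ (k : ℕ)} with hZ
  set E : Fin t → Set (Fin n →₀ ℕ) := fun j =>
    {e | ∃ c : Fin n →₀ ℕ, ↑c.support ⊆ Z j ∧ e = b j + c} with hE
  set f : (Fin n →₀ ℕ) → MvPolynomial (Fin n) K := fun e => monomial e 1 with hf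
  -- support condition on c gives vanishing below j
  have hc0 : ∀ (j : Fin t) (c : Fin n →₀ ℕ), ↑c.support ⊆ Z j →
      ∀ p : Fin n, (p : ℕ) < (j : ℕ) → c p = 0 := by
    intro j c hc p hpj
    by_contra h
    have hp : p ∈ c.support := Finsupp.mem_support_iff.mpr h
    have := hc hp
    simp only [hZ, Set.mem_setOf_eq] at this
    omega
  -- pairwise disjointness of the exponent sets
  have hkey : ∀ (j j' : Fin t), (j : ℕ) < (j' : ℕ) → ∀ e, e ∈ E j → e ∈ E j' → False := by
    intro j j' hjj' e hej hej'
    obtain ⟨c, hc, rfl⟩ := hej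
    obtain ⟨c', hc', heq⟩ := hej'
    have hj1 : (j : ℕ) < t - 1 := by have := j'.isLt; omega
    set P : Fin n := Fin.castLE ht j with hP
    have hPval : (P : ℕ) = (j : ℕ) := rfl
    have h1 : (b j) P = 1 + A j P := by
      simp only [hb, hj1, if_true, Finsupp.add_apply, Finsupp.single_eq_same, hP]
    have h2 : (b j') P = A j' P := by
      by_cases hj'1 : (j' : ℕ) < t - 1
      · have hne : Fin.castLE ht j' ≠ P := by
          simp only [hP, Ne, Fin.ext_iff, Fin.coe_castLE]
          omega
        simp only [hb, hj'1, if_true, Finsupp.add_apply,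
          Finsupp.single_apply, if_neg hne, zero_add]
      · simp only [hb, hj'1, if_false, Finsupp.add_apply, Finsupp.coe_zero,
          Pi.zero_apply, zero_add]
    have h3 : c' P = 0 := hc0 j' c' hc' P (by omega)
    have h4 : A j P = A j' P := hAcoord j j' P (by omega) (by omega)
    have heqP : (b j) P + c P = (b j') P + c' P := by
      have := congrArg (fun g => g P) heq
      simpa [Finsupp.add_apply] using this
    rw [h1, h2, h3, h4] at heqP
    omega
  have hEdisj : ∀ j j' : Fin t, j ≠ j' → Disjoint (E j) (E j') := by
    intro j j' hne
    rw [Set.disjoint_left]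
    intro e hej hej'
    rcases lt_trichotomy (j : ℕ) (j' : ℕ) with h | h | h
    · exact hkey j j' h e hej hej'
    · exact hne (Fin.ext h)
    · exact hkey j' j h e hej' hej
  -- the union of the exponent sets is the divisibility set
  set D : Set (Fin n →₀ ℕ) := {e | ∃ j, b j ≤ e} with hD
  have hUnion : (⋃ j, E j) = D := by
    apply Set.Subset.antisymm
    · intro e he
      obtain ⟨j, hj⟩ := Set.mem_iUnion.mp he
      obtain ⟨c, _, rfl⟩ := hj
      exact ⟨j, le_add_right le_rfl⟩
    · intro e he
      obtain ⟨j, hle⟩ := he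
      have claim : ∀ (v : ℕ) (j : Fin t), (j : ℕ) = v → b j ≤ e → e ∈ ⋃ j', E j' := by
        intro v
        induction v using Nat.strong_induction_on with
        | _ v ih =>
          intro j hjv hle
          set c : Fin n →₀ ℕ := e - b j with hcdef
          have hec : e = b j + c := (add_tsub_cancel_of_le hle).symm
          by_cases hs : ↑c.support ⊆ Z j
          · exact Set.mem_iUnion.mpr ⟨j, ⟨c, hs, hec⟩⟩
          · obtain ⟨p, hps, hpZ⟩ := Set.not_subset.mp hs
            have hpj : (p : ℕ) < (j : ℕ) := by
              simp only [hZ, Set.mem_setOf_eq, not_le] at hpZ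
              exact hpZ
            have hpt : (p : ℕ) < t := lt_trans hpj j.isLt
            have hpt1 : (p : ℕ) < t - 1 := by have := j.isLt; omega
            set p' : Fin t := ⟨(p : ℕ), hpt⟩ with hp'
            have hcast : Fin.castLE ht p' = p := Fin.ext rfl
            have hp1 : (p' : ℕ) < t - 1 := hpt1
            have hcp : 1 ≤ c p := by
              have := Finsupp.mem_support_iff.mp hps
              omega
            have hle' : b p' ≤ e := by
              rw [Finsupp.le_def]
              intro q
              by_cases hq : q = p
              · subst hq
                have hb' : (b p') q = 1 + A p' q := by
                  simp only [hb, hp1, if_true, Finsupp.add_apply, hcast,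
                    Finsupp.single_eq_same]
                have hAq : A p' q = A j q := hAcoord p' j q (le_refl _) (by omega)
                have heq : e q = (b j) q + c q := by
                  rw [hec]; simp [Finsupp.add_apply]
                have := hbA j q
                rw [hb', hAq]
                omega
              · have hb' : (b p') q = A p' q := by
                  simp only [hb, hp1, if_true, Finsupp.add_apply, hcast,
                    Finsupp.single_apply]
                  rw [if_neg (fun h => hq h.symm), zero_add]
                have heq : e q = (b j) q + c q := by
                  rw [hec]; simp [Finsupp.add_apply]
                have h5 := hAmono j p' (by rw [Fin.le_def]; exact le_of_lt hpj) q
                have := hbA j q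
                rw [hb']
                omega
            exact ih (p : ℕ) (by omega) p' rfl hle'
      exact claim (j : ℕ) j rfl hle
  -- each stanley space is the span of monomials with exponents in E j
  have himage : ∀ j : Fin t,
      ((ccGens K ht m j * ·) '' monomialsIn K (Z j)) = f '' E j := by
    intro j
    ext q
    constructor
    · rintro ⟨p, ⟨c, hc, rfl⟩, rfl⟩
      exact ⟨b j + c, ⟨c, hc, rfl⟩, by
        simp only [hf, hgen j, monomial_mul, one_mul]⟩
    · rintro ⟨e, ⟨c, hc, rfl⟩, rfl⟩
      exact ⟨monomial c 1, ⟨c, hc, rfl⟩, by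
        simp only [hf, hgen j, monomial_mul, one_mul]⟩
  have hspan : ∀ j : Fin t,
      stanleySpace K (ccGens K ht m j) (Z j) = Submodule.span K (f '' E j) := by
    intro j
    rw [stanleySpace, himage j]
  -- linear independence of monomials
  have hlin : LinearIndependent K f := by
    have := (MvPolynomial.basisMonomials (Fin n) K).linearIndependent
    rwa [MvPolynomial.coe_basisMonomials] at this
  -- the ideal as a K-span
  have hI' : I = Ideal.span (f '' Set.range b) := by
    rw [hI]
    congr 1
    rw [show ccGens K ht m = f ∘ b from funext hgen, Set.range_comp]
  have hId : Submodule.restrictScalars K I = Submodule.span K (f '' D) := by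
    apply le_antisymm
    · intro p hp
      rw [Submodule.restrictScalars_mem, hI'] at hp
      have hdiv := MvPolynomial.mem_ideal_span_monomial_image.mp (by
        rwa [show f '' Set.range b = (fun s => monomial s (1:K)) '' Set.range b from rfl] at hp)
      rw [p.as_sum]
      refine Submodule.sum_mem _ fun v hv => ?_
      obtain ⟨si, ⟨jj, rfl⟩, hsile⟩ := hdiv v hv
      have : (monomial v) (coeff v p) = (coeff v p) • f v := by
        rw [hf, smul_monomial, smul_eq_mul, mul_one]
      rw [this]
      exact Submodule.smul_mem _ _ (Submodule.subset_span ⟨v, ⟨jj, hsile⟩, rfl⟩)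
    · rw [Submodule.span_le]
      rintro _ ⟨e, ⟨jj, hle⟩, rfl⟩
      rw [SetLike.mem_coe, Submodule.restrictScalars_mem]
      have : f e = ccGens K ht m jj * monomial (e - b jj) 1 := by
        rw [hf, hgen jj, monomial_mul, one_mul, add_tsub_cancel_of_le hle]
      rw [this]
      exact Ideal.mul_mem_right _ _ (hI ▸ Ideal.subset_span ⟨jj, rfl⟩)
  -- conclusion
  constructor
  · intro j
    have hle : (⨆ (j' : Fin t) (_ : j' ≠ j),
        stanleySpace K (ccGens K ht m j') (Z j')) ≤
        Submodule.span K (f '' ⋃ (j' : Fin t) (_ : j' ≠ j), E j') := by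
      refine iSup₂_le fun j' hj' => ?_
      rw [hspan j']
      exact Submodule.span_mono (Set.image_mono (fun x hx => Set.mem_iUnion₂.mpr ⟨j', hj', hx⟩))
    have hd : Disjoint (Submodule.span K (f '' E j))
        (Submodule.span K (f '' ⋃ (j' : Fin t) (_ : j' ≠ j), E j')) := by
      refine hlin.disjoint_span_image ?_
      rw [Set.disjoint_iUnion_right]
      intro j'
      rw [Set.disjoint_iUnion_right]
      intro hj'
      exact hEdisj j j' (Ne.symm hj')
    have hfin : Disjoint (stanleySpace K (ccGens K ht m j) (Z j))
        (⨆ (j' : Fin t) (_ : j' ≠ j), stanleySpace K (ccGens K ht m j') (Z j')) := by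
      rw [hspan j]
      exact Disjoint.mono_right hle hd
    exact hfin
  · have hfin : (⨆ j : Fin t, stanleySpace K (ccGens K ht m j) (Z j))
        = Submodule.restrictScalars K I := by
      rw [hId, ← hUnion, Set.image_iUnion, Submodule.span_iUnion]
      exact iSup_congr hspan
    exact hfin
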